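/- Let n ≥ 2, m ≥ 3, and let P be an m-th order, n-dimensional stochastic tensor on S = {1,…,n}. Then there do not exist states i, j ∈ S such that i and j communicate (i ↔ j), i is recurrent, and j is fully transient. In particular, an equivalence class of the communication relation cannot contain both a recurrent state and a fully transient state. -/

import Mathlib

open Finset

/-- An `m`-th order, `n`-dimensional tensor with `m = r + 2`: the entry
`p_{i₁ i₂ … i_m}` is written `P i₁ t`, where `t = (i₂, …, i_m)` is the tail of
`m - 1 = r + 1` indices. -/
abbrev HOTensor (n r : ℕ) := Fin n → (Fin (r + 1) → Fin n) → ℝ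

/-- `P` is a stochastic tensor. -/
def IsStochasticT {n r : ℕ} (P : HOTensor n r) : Prop :=
  (∀ i t, 0 ≤ P i t ∧ P i t ≤ 1) ∧ ∀ t, ∑ i : Fin n, P i t = 1

/-- The product `A ⊠ B`:
`(A ⊠ B)_{i₁ i₂ … i_m} = Σ_j a_{i₁ j i₂ … i_{m-1}} b_{j i₂ … i_m}`. -/
def tmul {n r : ℕ} (A B : HOTensor n r) : HOTensor n r :=
  fun i t => ∑ j : Fin n, A i (Fin.cons j (Fin.init t)) * B j t

/-- Tensor powers: `tpow P k` is `P^k`, with entries the `k`-step transition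
probabilities `p^{(k)}_{i₁ … i_m}`; `P^0` is the identity tensor. -/
def tpow {n r : ℕ} (P : HOTensor n r) : ℕ → HOTensor n r
  | 0 => fun i t => if i = t 0 then 1 else 0
  | k + 1 => tmul (tpow P k) P

/-- `fpp P k` is the `(k+1)`-step first passage probability tensor `F^{[k+1]}`:
`f^{[1]} = p`, and `f^{[k+1]}_{i₁ i₂ … i_m} = Σ_{j ≠ i₁} f^{[k]}_{i₁ j i₂ … i_{m-1}} p_{j i₂ … i_m}`. -/
def fpp {n r : ℕ} (P : HOTensor n r) : ℕ → HOTensor n r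
  | 0 => P
  | k + 1 => fun i t =>
      ∑ j ∈ Finset.univ.filter (fun j => j ≠ i), fpp P k i (Fin.cons j (Fin.init t)) * P j t

/-- The ever-reaching probability `f_{i₁ i₂ … i_m} = Σ_{k=1}^∞ f^{[k]}_{i₁ i₂ … i_m}`. -/
noncomputable def everReach {n r : ℕ} (P : HOTensor n r) : HOTensor n r :=
  fun i t => ∑' k : ℕ, fpp P k i t

/-- State `j` is reachable from state `i` (`i → j`): for every choice of
`i₃, …, i_m` there is `k ≥ 0` with `p^{(k)}_{j i i₃ … i_m} > 0`. -/
def Reach {n r : ℕ} (P : HOTensor n r) (i j : Fin n) : Prop :=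
  ∀ u : Fin r → Fin n, ∃ k : ℕ, 0 < tpow P k j (Fin.cons i u)

/-- States `i` and `j` communicate (`i ↔ j`). -/
def Comm {n r : ℕ} (P : HOTensor n r) (i j : Fin n) : Prop :=
  Reach P i j ∧ Reach P j i

/-- State `i` is recurrent: `f_{i i i₃ … i_m} = 1` for all `i₃, …, i_m`. -/
def RecurrentState {n r : ℕ} (P : HOTensor n r) (i : Fin n) : Prop :=
  ∀ u : Fin r → Fin n, everReach P i (Fin.cons i u) = 1

/-- State `i` is fully transient: `f_{i i i₃ … i_m} < 1` for all `i₃, …, i_m`. -/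
def FullyTransientState {n r : ℕ} (P : HOTensor n r) (i : Fin n) : Prop :=
  ∀ u : Fin r → Fin n, everReach P i (Fin.cons i u) < 1

/-- `P` is ergodic: for all indices there is `k ≥ 1` with `p^{(k)}_{i₁ … i_m} > 0`. -/
def ErgodicT {n r : ℕ} (P : HOTensor n r) : Prop :=
  ∀ (i : Fin n) (t : Fin (r + 1) → Fin n), ∃ k : ℕ, 1 ≤ k ∧ 0 < tpow P k i t

/-- `P` is regular: some power `P^k`, `k ≥ 1`, has all entries positive. -/
def RegularT {n r : ℕ} (P : HOTensor n r) : Prop :=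
  ∃ k : ℕ, 1 ≤ k ∧ ∀ (i : Fin n) (t : Fin (r + 1) → Fin n), 0 < tpow P k i t

/-- The reduced transition matrix `Q` of `P`: rows and columns are indexed by
`(m-1)`-tuples; the entry in row `(i₁, …, i_{m-1})` and column `(j₁, …, j_{m-1})`
is `p_{i₁ i₂ … i_{m-1} j_{m-1}}` if `j_ℓ = i_{ℓ+1}` for `ℓ = 1, …, m-2`, else `0`. -/
def reducedT {n r : ℕ} (P : HOTensor n r) :
    Matrix (Fin (r + 1) → Fin n) (Fin (r + 1) → Fin n) ℝ :=
  fun u v =>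
    if ∀ ℓ : Fin r, v ℓ.castSucc = u ℓ.succ then
      P (u 0) (Fin.snoc (Fin.tail u) (v (Fin.last r)))
    else 0

namespace NoCommAux

variable {n r : ℕ}

/-- One step of the lifted chain on tails: prepend `j`, drop the last entry. -/
def shiftT (j : Fin n) (s : Fin (r + 1) → Fin n) : Fin (r + 1) → Fin n :=
  Fin.cons j (Fin.init s)

/-- The step relation of the lifted chain. -/
def stepR (P : HOTensor n r) (s t : Fin (r + 1) → Fin n) : Prop :=
  ∃ j, 0 < P j s ∧ t = shiftT j s

variable {P : HOTensor n r}

lemma fpp_nonneg (hP : IsStochasticT P) (k : ℕ) (i : Fin n) :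
    ∀ s, 0 ≤ fpp P k i s := by
  induction k with
  | zero => exact fun s => (hP.1 i s).1
  | succ k ih =>
    intro s
    exact Finset.sum_nonneg fun j _ => mul_nonneg (ih _) (hP.1 j s).1

lemma sum_split (hP : IsStochasticT P) (i : Fin n) (s : Fin (r + 1) → Fin n) :
    P i s + ∑ j ∈ Finset.univ.filter (fun j => j ≠ i), P j s = 1 := by
  classical
  rw [Finset.filter_ne']
  exact (Finset.add_sum_erase Finset.univ (fun j => P j s) (Finset.mem_univ i)).trans (hP.2 s)

lemma sum_range_fpp_le (hP : IsStochasticT P) (i : Fin n) (K : ℕ) :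
    ∀ s, ∑ k ∈ Finset.range K, fpp P k i s ≤ 1 := by
  classical
  induction K with
  | zero => intro s; simp
  | succ K ih =>
    intro s
    rw [Finset.sum_range_succ']
    have h1 : ∑ k ∈ Finset.range K, fpp P (k + 1) i s
        = ∑ j ∈ Finset.univ.filter (fun j => j ≠ i),
            (∑ k ∈ Finset.range K, fpp P k i (shiftT j s)) * P j s := by
      simp only [fpp, shiftT]
      rw [Finset.sum_comm]
      exact Finset.sum_congr rfl fun j _ => (Finset.sum_mul _ _ _).symm
    have h2 : ∑ j ∈ Finset.univ.filter (fun j => j ≠ i),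
        (∑ k ∈ Finset.range K, fpp P k i (shiftT j s)) * P j s
        ≤ ∑ j ∈ Finset.univ.filter (fun j => j ≠ i), P j s := by
      refine Finset.sum_le_sum fun j _ => ?_
      calc (∑ k ∈ Finset.range K, fpp P k i (shiftT j s)) * P j s
          ≤ 1 * P j s := mul_le_mul_of_nonneg_right (ih _) (hP.1 j s).1
        _ = P j s := one_mul _
    have h3 : fpp P 0 i s = P i s := rfl
    calc ∑ k ∈ Finset.range K, fpp P (k + 1) i s + fpp P 0 i s
        ≤ (∑ j ∈ Finset.univ.filter (fun j => j ≠ i), P j s) + P i s := by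
          rw [h1, h3]; exact add_le_add h2 le_rfl
      _ = 1 := by rw [add_comm]; exact sum_split hP i s

lemma fpp_summable (hP : IsStochasticT P) (i : Fin n) (s : Fin (r + 1) → Fin n) :
    Summable (fun k => fpp P k i s) :=
  summable_of_sum_range_le (fun k => fpp_nonneg hP k i s)
    (fun K => sum_range_fpp_le hP i K s)

lemma everReach_le_one (hP : IsStochasticT P) (i : Fin n) (s : Fin (r + 1) → Fin n) :
    everReach P i s ≤ 1 :=
  Summable.tsum_le_of_sum_range_le (fpp_summable hP i s) (fun K => sum_range_fpp_le hP i K s)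

lemma everReach_nonneg (hP : IsStochasticT P) (i : Fin n) (s : Fin (r + 1) → Fin n) :
    0 ≤ everReach P i s :=
  tsum_nonneg (fun k => fpp_nonneg hP k i s)

/-- The one-step recursion for the ever-reaching probability. -/
lemma everReach_rec (hP : IsStochasticT P) (i : Fin n) (s : Fin (r + 1) → Fin n) :
    everReach P i s = P i s + ∑ j ∈ Finset.univ.filter (fun j => j ≠ i),
      everReach P i (shiftT j s) * P j s := by
  classical
  have h0 : everReach P i s = fpp P 0 i s + ∑' k, fpp P (k + 1) i s :=
    Summable.tsum_eq_zero_add (fpp_summable hP i s)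
  have h1 : (∑' k, fpp P (k + 1) i s)
      = ∑' k, ∑ j ∈ Finset.univ.filter (fun j => j ≠ i),
          fpp P k i (shiftT j s) * P j s := by rfl
  have h2 : (∑' k, ∑ j ∈ Finset.univ.filter (fun j => j ≠ i),
        fpp P k i (shiftT j s) * P j s)
      = ∑ j ∈ Finset.univ.filter (fun j => j ≠ i),
          ∑' k, fpp P k i (shiftT j s) * P j s :=
    Summable.tsum_finsetSum (fun j _ => (fpp_summable hP i (shiftT j s)).mul_right _)
  have h3 : ∀ j, (∑' k, fpp P k i (shiftT j s) * P j s)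
      = everReach P i (shiftT j s) * P j s := fun j => tsum_mul_right
  rw [h0, h1, h2]
  exact congrArg (fun x => fpp P 0 i s + x) (Finset.sum_congr rfl fun j _ => h3 j)

lemma tpow_nonneg (hP : IsStochasticT P) (k : ℕ) (i : Fin n) :
    ∀ s, 0 ≤ tpow P k i s := by
  induction k with
  | zero => intro s; dsimp [tpow]; positivity
  | succ k ih =>
    intro s
    show (0:ℝ) ≤ ∑ j : Fin n, tpow P k i (Fin.cons j (Fin.init s)) * P j s
    exact Finset.sum_nonneg fun j _ => mul_nonneg (ih _) (hP.1 j s).1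

lemma pos_of_mul_pos' {x y : ℝ} (hx : 0 ≤ x) (hy : 0 ≤ y) (h : 0 < x * y) :
    0 < x ∧ 0 < y := by
  rcases mul_pos_iff.mp h with ⟨h1, h2⟩ | ⟨h1, h2⟩
  · exact ⟨h1, h2⟩
  · linarith

/-- If `p^{(k+1)}_{c s} > 0` then some tail `s₂` reachable from `s` satisfies `P c s₂ > 0`. -/
lemma tpow_path (hP : IsStochasticT P) (c : Fin n) :
    ∀ (k : ℕ) (s : Fin (r + 1) → Fin n), 0 < tpow P (k + 1) c s →
      ∃ s₂, Relation.ReflTransGen (stepR P) s s₂ ∧ 0 < P c s₂ := by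
  intro k
  induction k with
  | zero =>
    intro s h
    have h' : 0 < ∑ j : Fin n, tpow P 0 c (Fin.cons j (Fin.init s)) * P j s := h
    obtain ⟨j, _, hj⟩ : ∃ j ∈ Finset.univ, 0 < tpow P 0 c (Fin.cons j (Fin.init s)) * P j s := by
      by_contra hc
      push_neg at hc
      have : ∑ j : Fin n, tpow P 0 c (Fin.cons j (Fin.init s)) * P j s ≤ 0 :=
        Finset.sum_nonpos fun j hjm => hc j hjm
      linarith
    obtain ⟨h1, h2⟩ := pos_of_mul_pos' (tpow_nonneg hP 0 c _) (hP.1 j s).1 hj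
    have hcj : c = j := by
      by_contra hne
      simp [tpow, Fin.cons_zero, hne] at h1
    exact ⟨s, Relation.ReflTransGen.refl, hcj ▸ h2⟩
  | succ k ih =>
    intro s h
    have h' : 0 < ∑ j : Fin n, tpow P (k + 1) c (Fin.cons j (Fin.init s)) * P j s := h
    obtain ⟨j, _, hj⟩ : ∃ j ∈ Finset.univ,
        0 < tpow P (k + 1) c (Fin.cons j (Fin.init s)) * P j s := by
      by_contra hc
      push_neg at hc
      have : ∑ j : Fin n, tpow P (k + 1) c (Fin.cons j (Fin.init s)) * P j s ≤ 0 :=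
        Finset.sum_nonpos fun j hjm => hc j hjm
      linarith
    obtain ⟨h1, h2⟩ := pos_of_mul_pos' (tpow_nonneg hP (k + 1) c _) (hP.1 j s).1 hj
    obtain ⟨s₂, hpath, hP2⟩ := ih (Fin.cons j (Fin.init s)) h1
    exact ⟨s₂, Relation.ReflTransGen.head ⟨j, h2, rfl⟩ hpath, hP2⟩

/-- If `f^{[k+1]}_{i s} > 0` then some tail `s₂` reachable from `s` satisfies `P i s₂ > 0`. -/
lemma fpp_path (hP : IsStochasticT P) (i : Fin n) :
    ∀ (k : ℕ) (s : Fin (r + 1) → Fin n), 0 < fpp P k i s →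
      ∃ s₂, Relation.ReflTransGen (stepR P) s s₂ ∧ 0 < P i s₂ := by
  intro k
  induction k with
  | zero => exact fun s h => ⟨s, Relation.ReflTransGen.refl, h⟩
  | succ k ih =>
    intro s h
    have h' : 0 < ∑ j ∈ Finset.univ.filter (fun j => j ≠ i),
        fpp P k i (Fin.cons j (Fin.init s)) * P j s := h
    obtain ⟨j, _, hj⟩ : ∃ j ∈ Finset.univ.filter (fun j => j ≠ i),
        0 < fpp P k i (Fin.cons j (Fin.init s)) * P j s := by
      by_contra hc
      push_neg at hc
      have : ∑ j ∈ Finset.univ.filter (fun j => j ≠ i),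
          fpp P k i (Fin.cons j (Fin.init s)) * P j s ≤ 0 :=
        Finset.sum_nonpos fun j hjm => hc j hjm
      linarith
    obtain ⟨h1, h2⟩ := pos_of_mul_pos' (fpp_nonneg hP k i _) (hP.1 j s).1 hj
    obtain ⟨s₂, hpath, hP2⟩ := ih (Fin.cons j (Fin.init s)) h1
    exact ⟨s₂, Relation.ReflTransGen.head ⟨j, h2, rfl⟩ hpath, hP2⟩

/-- Propagation of `everReach = 1` along positive-probability steps (given recurrence). -/
lemma reach_one_closed (hP : IsStochasticT P) {i : Fin n}
    (hRec : ∀ u : Fin r → Fin n, everReach P i (Fin.cons i u) = 1)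
    (s : Fin (r + 1) → Fin n) (hs : everReach P i s = 1)
    (j₀ : Fin n) (hj₀ : 0 < P j₀ s) : everReach P i (shiftT j₀ s) = 1 := by
  classical
  by_cases hji : j₀ = i
  · subst hji; exact hRec (Fin.init s)
  · by_contra hne
    have hlt : everReach P i (shiftT j₀ s) < 1 :=
      lt_of_le_of_ne (everReach_le_one hP i _) hne
    have hrec := everReach_rec hP i s
    have hstrict : ∑ j ∈ Finset.univ.filter (fun j => j ≠ i),
        everReach P i (shiftT j s) * P j s
        < ∑ j ∈ Finset.univ.filter (fun j => j ≠ i), P j s := by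
      refine Finset.sum_lt_sum (fun j _ => ?_) ⟨j₀, ?_, ?_⟩
      · calc everReach P i (shiftT j s) * P j s ≤ 1 * P j s :=
              mul_le_mul_of_nonneg_right (everReach_le_one hP i _) (hP.1 j s).1
          _ = P j s := one_mul _
      · simp [hji]
      · calc everReach P i (shiftT j₀ s) * P j₀ s < 1 * P j₀ s :=
              mul_lt_mul_of_pos_right hlt hj₀
          _ = P j₀ s := one_mul _
    have hsum := sum_split hP i s
    rw [hs] at hrec
    linarith

/-- The maximum principle step: at a point where `1 - everReach P j` attains a positive
maximal value among its successors, `P j` vanishes and the value propagates. -/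
lemma max_step (hP : IsStochasticT P) (j : Fin n) (M : ℝ) (hM : 0 < M)
    (s : Fin (r + 1) → Fin n)
    (hle : ∀ j', 0 < P j' s → 1 - everReach P j (shiftT j' s) ≤ M)
    (heq : 1 - everReach P j s = M) :
    P j s = 0 ∧ ∀ j', 0 < P j' s → 1 - everReach P j (shiftT j' s) = M := by
  classical
  have hrec := everReach_rec hP j s
  have hsum := sum_split hP j s
  have hMs : M = ∑ j' ∈ Finset.univ.filter (fun j' => j' ≠ j),
      (1 - everReach P j (shiftT j' s)) * P j' s := by
    have : ∑ j' ∈ Finset.univ.filter (fun j' => j' ≠ j),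
        (1 - everReach P j (shiftT j' s)) * P j' s
        = (∑ j' ∈ Finset.univ.filter (fun j' => j' ≠ j), P j' s)
          - ∑ j' ∈ Finset.univ.filter (fun j' => j' ≠ j),
              everReach P j (shiftT j' s) * P j' s := by
      rw [← Finset.sum_sub_distrib]
      exact Finset.sum_congr rfl fun j' _ => by ring
    rw [this]
    linarith
  have hterm : ∀ j' ∈ Finset.univ.filter (fun j' => j' ≠ j),
      (1 - everReach P j (shiftT j' s)) * P j' s ≤ M * P j' s := by
    intro j' _
    rcases lt_or_eq_of_le (hP.1 j' s).1 with hp | hp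
    · exact mul_le_mul_of_nonneg_right (hle j' hp) (le_of_lt hp)
    · rw [← hp]; simp
  have hbound : M ≤ M * (1 - P j s) := by
    calc M = ∑ j' ∈ Finset.univ.filter (fun j' => j' ≠ j),
            (1 - everReach P j (shiftT j' s)) * P j' s := hMs
      _ ≤ ∑ j' ∈ Finset.univ.filter (fun j' => j' ≠ j), M * P j' s :=
            Finset.sum_le_sum hterm
      _ = M * ∑ j' ∈ Finset.univ.filter (fun j' => j' ≠ j), P j' s := by
            rw [Finset.mul_sum]
      _ = M * (1 - P j s) := by rw [show ∑ j' ∈ Finset.univ.filter (fun j' => j' ≠ j),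
            P j' s = 1 - P j s by linarith]
  have hPj0 : P j s = 0 := by
    have h1 : M * P j s ≤ 0 := by nlinarith
    have h2 : 0 ≤ P j s := (hP.1 j s).1
    nlinarith
  refine ⟨hPj0, ?_⟩
  have hfilter : ∑ j' ∈ Finset.univ.filter (fun j' => j' ≠ j), P j' s = 1 := by linarith
  have hzero : ∑ j' ∈ Finset.univ.filter (fun j' => j' ≠ j),
      (M * P j' s - (1 - everReach P j (shiftT j' s)) * P j' s) = 0 := by
    rw [Finset.sum_sub_distrib, ← Finset.mul_sum, hfilter]
    linarith
  have hall := (Finset.sum_eq_zero_iff_of_nonneg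
    (fun j' hj' => by linarith [hterm j' hj'])).mp hzero
  intro j' hj'
  have hj'ne : j' ≠ j := by
    intro hcontra; subst hcontra; rw [hPj0] at hj'; exact lt_irrefl 0 hj'
  have := hall j' (by simp [hj'ne])
  have hfac : M - (1 - everReach P j (shiftT j' s)) = 0 := by
    rcases mul_eq_zero.mp (by linarith [this] : (M - (1 - everReach P j (shiftT j' s))) * P j' s = 0) with h | h
    · exact h
    · exact absurd h (ne_of_gt hj')
  linarith

end NoCommAux


/-- no two communicating states can be respectively recurrent and
fully transient (here the order is `m - 1` with `m = r + 2 ≥ 3`). -/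
theorem no_comm_recurrent_fullyTransient (n r : ℕ) (hn : 2 ≤ n) (hr : 1 ≤ r)
    (P : HOTensor n r) (hP : IsStochasticT P) :
    ¬ ∃ i j : Fin n, Comm P i j ∧ RecurrentState P i ∧ FullyTransientState P j := by
  classical
  rintro ⟨i, j, ⟨hij, hji⟩, hRec, hTrans⟩
  by_cases hij' : i = j
  · subst hij'
    exact absurd (hRec (fun _ => i)) (ne_of_lt (hTrans (fun _ => i)))
  -- the base point of the reachable set
  set a : Fin (r + 1) → Fin n := Fin.cons i (fun _ => i) with ha_def
  have ha0 : a 0 = i := Fin.cons_zero _ _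
  -- recurrence propagates along the reachable set
  have hF1 : ∀ s, Relation.ReflTransGen (NoCommAux.stepR P) a s → everReach P i s = 1 := by
    intro s h
    induction h with
    | refl => exact hRec (fun _ => i)
    | tail h₁ h₂ ih =>
      obtain ⟨j₀, hj₀, rfl⟩ := h₂
      exact NoCommAux.reach_one_closed hP hRec _ ih j₀ hj₀
  -- the reachable set as a finset
  set Rs : Finset (Fin (r + 1) → Fin n) :=
    Finset.univ.filter (fun s => Relation.ReflTransGen (NoCommAux.stepR P) a s) with hRs_def
  have hmemR : ∀ s, s ∈ Rs ↔ Relation.ReflTransGen (NoCommAux.stepR P) a s := by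
    intro s; simp [hRs_def]
  have haR : a ∈ Rs := (hmemR a).mpr Relation.ReflTransGen.refl
  obtain ⟨sm, hsmR, hsmmax⟩ :=
    Rs.exists_max_image (fun s => 1 - everReach P j s) ⟨a, haR⟩
  set M : ℝ := 1 - everReach P j sm with hM_def
  have hsm_reach : Relation.ReflTransGen (NoCommAux.stepR P) a sm := (hmemR sm).mp hsmR
  rcases le_or_gt M 0 with hM | hM
  · -- easy case: every reachable tail has everReach P j ≥ 1; find one in A_j
    obtain ⟨k, hk⟩ := hij (Fin.tail a)
    have hka : Fin.cons i (Fin.tail a) = a := by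
      rw [ha_def, Fin.tail_cons]
    rw [hka] at hk
    match k, hk with
    | 0, hk =>
      have : tpow P 0 j a = 0 := by
        simp [tpow, ha0, hij']
        intro h; exact hij' h.symm
      rw [this] at hk; exact lt_irrefl 0 hk
    | k + 1, hk =>
      obtain ⟨s₂, hpath, hPj2⟩ := NoCommAux.tpow_path hP j k a hk
      have hbR : NoCommAux.shiftT j s₂ ∈ Rs :=
        (hmemR _).mpr (hpath.tail ⟨j, hPj2, rfl⟩)
      have hble := hsmmax _ hbR
      have hb1 : (1:ℝ) ≤ everReach P j (NoCommAux.shiftT j s₂) := by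
        linarith
      have := hTrans (Fin.init s₂)
      have hsh : NoCommAux.shiftT j s₂ = Fin.cons j (Fin.init s₂) := rfl
      rw [hsh] at hb1
      linarith
  · -- hard case: maximum principle
    have hprop : ∀ t, Relation.ReflTransGen (NoCommAux.stepR P) sm t →
        1 - everReach P j t = M := by
      intro t h
      induction h with
      | refl => rfl
      | @tail b c h₁ h₂ ih =>
        obtain ⟨j₀, hj₀, rfl⟩ := h₂
        have hbreach : Relation.ReflTransGen (NoCommAux.stepR P) a b :=
          hsm_reach.trans h₁
        have hle : ∀ j', 0 < P j' b → 1 - everReach P j (NoCommAux.shiftT j' b) ≤ M :=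
          fun j' hj' => hsmmax _ ((hmemR _).mpr (hbreach.tail ⟨j', hj', rfl⟩))
        exact (NoCommAux.max_step hP j M hM b hle ih).2 j₀ hj₀
    -- find a tail in A_i reachable from sm
    have hFsm : everReach P i sm = 1 := hF1 sm hsm_reach
    have hfpos : ∃ k, 0 < fpp P k i sm := by
      by_contra hc
      push_neg at hc
      have hz : ∀ k, fpp P k i sm = 0 :=
        fun k => le_antisymm (hc k) (NoCommAux.fpp_nonneg hP k i sm)
      have : everReach P i sm = 0 := by
        simp only [everReach, hz, tsum_zero]
      rw [this] at hFsm; norm_num at hFsm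
    obtain ⟨k, hk⟩ := hfpos
    obtain ⟨s₂, hp2, hPi2⟩ := NoCommAux.fpp_path hP i k sm hk
    have hs₁ : Relation.ReflTransGen (NoCommAux.stepR P) sm (NoCommAux.shiftT i s₂) :=
      hp2.tail ⟨i, hPi2, rfl⟩
    obtain ⟨k', hk'⟩ := hij (Fin.init s₂)
    have hsh : Fin.cons i (Fin.init s₂) = NoCommAux.shiftT i s₂ := rfl
    rw [hsh] at hk'
    match k', hk' with
    | 0, hk' =>
      have h0 : (NoCommAux.shiftT i s₂) 0 = i := Fin.cons_zero _ _
      have : tpow P 0 j (NoCommAux.shiftT i s₂) = 0 := by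
        simp [tpow, h0]
        intro h; exact hij' h.symm
      rw [this] at hk'; exact lt_irrefl 0 hk'
    | k' + 1, hk' =>
      obtain ⟨s₃, hp3, hPj3⟩ := NoCommAux.tpow_path hP j k' _ hk'
      have hreach3 : Relation.ReflTransGen (NoCommAux.stepR P) sm s₃ := hs₁.trans hp3
      have hgs₃ : 1 - everReach P j s₃ = M := hprop s₃ hreach3
      have hareach3 : Relation.ReflTransGen (NoCommAux.stepR P) a s₃ :=
        hsm_reach.trans hreach3
      have hle3 : ∀ j', 0 < P j' s₃ → 1 - everReach P j (NoCommAux.shiftT j' s₃) ≤ M :=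
        fun j' hj' => hsmmax _ ((hmemR _).mpr (hareach3.tail ⟨j', hj', rfl⟩))
      have hPj30 := (NoCommAux.max_step hP j M hM s₃ hle3 hgs₃).1
      rw [hPj30] at hPj3; exact lt_irrefl 0 hPj3
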